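/- (Sample complexity corollary) Under the assumptions of Theorem 4.3, for any ε > 0 and δ ∈ (0,1), if R ≥ (8/ε²)·(2dM·log(1 + 16γ/ε) + log(2/δ)), then with probability at least 1 - δ, sup_{x,y∈X} |k(x,y) - k̃(x,y)| ≤ ε. -/

import Mathlib

open MeasureTheory ProbabilityTheory

/-- exp is 1-Lipschitz on nonpositive reals. -/
lemma exp_lip {a b : ℝ} (ha : a ≤ 0) (hb : b ≤ 0) :
    |Real.exp a - Real.exp b| ≤ |a - b| := by
  wlog h : b ≤ a generalizing a b
  · rw [abs_sub_comm, abs_sub_comm a b]; exact this hb ha (le_of_not_ge h)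
  rw [abs_of_nonneg (sub_nonneg.2 (Real.exp_le_exp.2 h)), abs_of_nonneg (sub_nonneg.2 h)]
  have h1 : Real.exp a * ((b - a) + 1) ≤ Real.exp a * Real.exp (b - a) := by
    have := Real.add_one_le_exp (b - a)
    nlinarith [Real.exp_pos a]
  rw [← Real.exp_add, add_sub_cancel] at h1
  nlinarith [Real.exp_pos a, Real.exp_le_one_iff.2 ha, sub_nonneg.2 h]

/-- Integrability of bounded measurable functions. -/
lemma int_bdd {Ω : Type*} [MeasurableSpace Ω] {μ : Measure Ω} [IsFiniteMeasure μ]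
    {Z : Ω → ℝ} {C : ℝ} (hm : AEStronglyMeasurable Z μ) (hb : ∀ ω, |Z ω| ≤ C) :
    Integrable Z μ :=
  Integrable.mono' (integrable_const C) hm (ae_of_all _ fun ω => by
    rw [Real.norm_eq_abs]; exact hb ω)

/-- Hoeffding-type mgf bound for a centered variable bounded by 1. -/
lemma mgf_bdd {Ω : Type*} [MeasurableSpace Ω] {μ : Measure Ω} [IsProbabilityMeasure μ]
    {Z : Ω → ℝ} (hm : Measurable Z) (hb : ∀ ω, |Z ω| ≤ 1) (hc : ∫ ω, Z ω ∂μ = 0)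
    (t : ℝ) : mgf Z μ t ≤ Real.exp (t ^ 2 / 2) := by
  have hint : Integrable (fun ω => Real.exp (t * Z ω)) μ := by
    refine Integrable.mono' (integrable_const (Real.exp |t|)) ((hm.const_mul t).exp.aestronglyMeasurable) (ae_of_all _ fun ω => ?_)
    rw [Real.norm_eq_abs, abs_of_pos (Real.exp_pos _), Real.exp_le_exp]
    calc t * Z ω ≤ |t * Z ω| := le_abs_self _
      _ = |t| * |Z ω| := abs_mul _ _
      _ ≤ |t| * 1 := by gcongr; exact hb ω
      _ = |t| := mul_one _
  have key : ∀ ω, Real.exp (t * Z ω) ≤ Real.cosh t + Z ω * Real.sinh t := by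
    intro ω
    have h1 : |Z ω| ≤ 1 := hb ω
    have hz1 : -1 ≤ Z ω := neg_le_of_abs_le h1
    have hz2 : Z ω ≤ 1 := le_of_abs_le h1
    have := convexOn_exp.2 (Set.mem_univ (-t)) (Set.mem_univ t)
      (by linarith : (0:ℝ) ≤ (1 - Z ω)/2) (by linarith : (0:ℝ) ≤ (1 + Z ω)/2) (by ring)
    simp only [smul_eq_mul] at this
    have harg : (1 - Z ω)/2 * (-t) + (1 + Z ω)/2 * t = t * Z ω := by ring
    rw [harg] at this
    refine this.trans_eq ?_
    rw [Real.cosh_eq, Real.sinh_eq]; ring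
  calc mgf Z μ t = ∫ ω, Real.exp (t * Z ω) ∂μ := rfl
    _ ≤ ∫ ω, (Real.cosh t + Z ω * Real.sinh t) ∂μ := by
        refine integral_mono hint ?_ key
        exact (integrable_const _).add ((int_bdd hm.aestronglyMeasurable hb).mul_const _)
    _ = Real.cosh t + (∫ ω, Z ω ∂μ) * Real.sinh t := by
        rw [integral_add (integrable_const _), integral_const, integral_mul_const]
        · simp [measure_univ]
        · exact (int_bdd hm.aestronglyMeasurable hb).mul_const _
    _ = Real.cosh t := by rw [hc]; ring
    _ ≤ Real.exp (t ^ 2 / 2) := Real.cosh_le_exp_half_sq t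

example : True := trivial

lemma chernoff_one {Ω : Type*} [MeasureSpace Ω] [IsProbabilityMeasure (ℙ : Measure Ω)]
    {R : ℕ} {Z : Fin R → Ω → ℝ}
    (hind : iIndepFun Z ℙ) (hmeas : ∀ i, Measurable (Z i))
    (hb : ∀ i ω, |Z i ω| ≤ 1) (hc : ∀ i, ∫ ω, Z i ω = 0) {t : ℝ} (ht : 0 ≤ t) :
    (ℙ {ω | (R : ℝ) * t ≤ ∑ i, Z i ω}).toReal ≤ Real.exp (-(R : ℝ) * t ^ 2 / 2) := by
  have hSmeas : Measurable (∑ i, Z i) := by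
    have : (∑ i, Z i) = fun ω => ∑ i, Z i ω := by ext ω; simp
    rw [this]; exact Finset.measurable_sum _ fun i _ => hmeas i
  have hSb : ∀ ω, |(∑ i, Z i) ω| ≤ (R : ℝ) := fun ω => by
    simp only [Finset.sum_apply]
    calc |∑ i, Z i ω| ≤ ∑ i, |Z i ω| := Finset.abs_sum_le_sum_abs _ _
      _ ≤ ∑ _i : Fin R, (1:ℝ) := Finset.sum_le_sum fun i _ => hb i ω
      _ = (R : ℝ) := by simp
  have hSint : Integrable (fun ω => Real.exp (t * (∑ i, Z i) ω)) ℙ := by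
    refine int_bdd (C := Real.exp (t * R)) ((hSmeas.const_mul t).exp.aestronglyMeasurable) (fun ω => ?_)
    rw [abs_of_pos (Real.exp_pos _), Real.exp_le_exp]
    calc t * (∑ i, Z i) ω ≤ |t * (∑ i, Z i) ω| := le_abs_self _
      _ = |t| * |(∑ i, Z i) ω| := abs_mul _ _
      _ ≤ |t| * (R : ℝ) := by gcongr; exact hSb ω
      _ = t * R := by rw [abs_of_nonneg ht]
  have h1 := measure_ge_le_exp_mul_mgf (μ := ℙ) (X := ∑ i, Z i) (t := t) ((R : ℝ) * t) ht hSint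
  have h2 : mgf (∑ i, Z i) ℙ t = ∏ i, mgf (Z i) ℙ t := hind.mgf_sum hmeas Finset.univ
  have h3 : ∏ i, mgf (Z i) ℙ t ≤ Real.exp ((R : ℝ) * (t ^ 2 / 2)) := by
    calc ∏ i, mgf (Z i) ℙ t ≤ ∏ _i : Fin R, Real.exp (t ^ 2 / 2) :=
          Finset.prod_le_prod (fun i _ => mgf_nonneg) (fun i _ => mgf_bdd (hmeas i) (hb i) (hc i) t)
      _ = Real.exp ((R : ℝ) * (t ^ 2 / 2)) := by
          rw [Finset.prod_const, ← Real.exp_nat_mul]; simp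
  have hset : {ω | (R : ℝ) * t ≤ ∑ i, Z i ω} = {ω | (R : ℝ) * t ≤ (∑ i, Z i) ω} := by
    ext ω; simp
  rw [hset]
  calc (ℙ {ω | (R : ℝ) * t ≤ (∑ i, Z i) ω}).toReal
      ≤ Real.exp (-t * ((R : ℝ) * t)) * mgf (∑ i, Z i) ℙ t := h1
    _ ≤ Real.exp (-t * ((R : ℝ) * t)) * Real.exp ((R : ℝ) * (t ^ 2 / 2)) := by
        rw [h2]; exact mul_le_mul_of_nonneg_left h3 (Real.exp_pos _).le
    _ = Real.exp (-(R : ℝ) * t ^ 2 / 2) := by rw [← Real.exp_add]; ring_nf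

lemma chernoff_two {Ω : Type*} [MeasureSpace Ω] [IsProbabilityMeasure (ℙ : Measure Ω)]
    {R : ℕ} {Z : Fin R → Ω → ℝ}
    (hind : iIndepFun Z ℙ) (hmeas : ∀ i, Measurable (Z i))
    (hb : ∀ i ω, |Z i ω| ≤ 1) (hc : ∀ i, ∫ ω, Z i ω = 0) {t : ℝ} (ht : 0 ≤ t) :
    ℙ {ω | (R : ℝ) * t ≤ |∑ i, Z i ω|} ≤ ENNReal.ofReal (2 * Real.exp (-(R : ℝ) * t ^ 2 / 2)) := by
  have hind' : iIndepFun (fun i => (fun x : ℝ => -x) ∘ Z i) ℙ :=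
    hind.comp _ (fun i => measurable_neg)
  have h1 := chernoff_one hind hmeas hb hc ht
  have h2 := chernoff_one hind' (fun i => (hmeas i).neg)
    (fun i ω => by simpa using hb i ω)
    (fun i => by simp only [Function.comp_apply]; rw [integral_neg, hc i, neg_zero]) ht
  have hsub : {ω | (R : ℝ) * t ≤ |∑ i, Z i ω|} ⊆
      {ω | (R : ℝ) * t ≤ ∑ i, Z i ω} ∪ {ω | (R : ℝ) * t ≤ ∑ i, ((fun x : ℝ => -x) ∘ Z i) ω} := by
    intro ω hω
    rcases le_abs.mp (Set.mem_setOf_eq ▸ hω) with h | h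
    · exact Or.inl h
    · refine Or.inr ?_; simpa [Finset.sum_neg_distrib] using h
  calc ℙ {ω | (R : ℝ) * t ≤ |∑ i, Z i ω|} ≤ _ := measure_mono hsub
    _ ≤ ℙ {ω | (R : ℝ) * t ≤ ∑ i, Z i ω} +
        ℙ {ω | (R : ℝ) * t ≤ ∑ i, ((fun x : ℝ => -x) ∘ Z i) ω} := measure_union_le _ _
    _ ≤ ENNReal.ofReal (Real.exp (-(R : ℝ) * t ^ 2 / 2)) +
        ENNReal.ofReal (Real.exp (-(R : ℝ) * t ^ 2 / 2)) := by
        gcongr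
        · rw [← ENNReal.ofReal_toReal (measure_ne_top ℙ _)]
          exact ENNReal.ofReal_le_ofReal h1
        · rw [← ENNReal.ofReal_toReal (measure_ne_top ℙ _)]
          exact ENNReal.ofReal_le_ofReal h2
    _ = ENNReal.ofReal (2 * Real.exp (-(R : ℝ) * t ^ 2 / 2)) := by
        rw [← ENNReal.ofReal_add (Real.exp_pos _).le (Real.exp_pos _).le]; ring_nf

lemma gfun_lip {X : Type*} [MetricSpace X] {γ : ℝ} (hγ : 0 < γ) (x y e e' ω : X) :
    |Real.exp (-γ * (dist x ω + dist ω y)) - Real.exp (-γ * (dist e ω + dist ω e'))| ≤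
      γ * (dist x e + dist y e') := by
  have h1 : -γ * (dist x ω + dist ω y) ≤ 0 := by
    have := dist_nonneg (x := x) (y := ω); have := dist_nonneg (x := ω) (y := y); nlinarith
  have h2 : -γ * (dist e ω + dist ω e') ≤ 0 := by
    have := dist_nonneg (x := e) (y := ω); have := dist_nonneg (x := ω) (y := e'); nlinarith
  refine (exp_lip h1 h2).trans ?_
  have : -γ * (dist x ω + dist ω y) - -γ * (dist e ω + dist ω e') =
      -γ * ((dist x ω - dist e ω) + (dist ω y - dist ω e')) := by ring
  rw [this, abs_mul, abs_neg, abs_of_pos hγ]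
  gcongr
  calc |dist x ω - dist e ω + (dist ω y - dist ω e')| ≤
      |dist x ω - dist e ω| + |dist ω y - dist ω e'| := abs_add_le _ _
    _ ≤ dist x e + dist y e' := by
        gcongr
        · exact abs_dist_sub_le x e ω
        · rw [dist_comm ω y, dist_comm ω e']; exact abs_dist_sub_le y e' ω

set_option maxHeartbeats 2000000 in
theorem stmt_16 {X : Type*} [MetricSpace X] [MeasurableSpace X] [OpensMeasurableSpace X]
    (d M : ℕ)
    (hcover : ∀ ε : ℝ, 0 < ε → ∃ E : Finset X,
      (E.card : ℝ) ≤ (1 + 2 / ε) ^ (d * M) ∧ ∀ x : X, ∃ e ∈ E, dist x e ≤ ε)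
    (μ : Measure X) [IsProbabilityMeasure μ] (γ : ℝ) (hγ : 0 < γ)
    {Ω : Type*} [MeasureSpace Ω] [IsProbabilityMeasure (ℙ : Measure Ω)]
    (R : ℕ) (W : Fin R → Ω → X) (hWmeas : ∀ i, Measurable (W i))
    (hindep : iIndepFun W ℙ)
    (hid : ∀ i, Measure.map (W i) ℙ = μ)
    (k : X → X → ℝ)
    (hk : ∀ x y, k x y = ∫ ω, Real.exp (-γ * (dist x ω + dist ω y)) ∂μ)
    (ktil : Ω → X → X → ℝ)
    (hktil : ∀ ω' x y, ktil ω' x y =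
      (1 / (R : ℝ)) * ∑ i, Real.exp (-γ * (dist x (W i ω') + dist (W i ω') y)))
    (ε δ : ℝ) (hε : 0 < ε) (hδ : δ ∈ Set.Ioo (0 : ℝ) 1)
    (hR : (8 / ε ^ 2) * (2 * (d : ℝ) * M * Real.log (1 + 16 * γ / ε) +
      Real.log (2 / δ)) ≤ (R : ℝ)) :
    ENNReal.ofReal (1 - δ) ≤ ℙ {ω' | ∀ x y : X, |k x y - ktil ω' x y| ≤ ε} := by
  obtain ⟨hδ0, hδ1⟩ := hδ
  rcases isEmpty_or_nonempty X with hX | hX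
  · have huniv : {ω' | ∀ x y : X, |k x y - ktil ω' x y| ≤ ε} = Set.univ := by
      ext ω'; simp [IsEmpty.forall_iff]
    rw [huniv, measure_univ]
    exact ENNReal.ofReal_le_one.mpr (by linarith)
  -- basic positivity
  have hlogδ : 0 < Real.log (2 / δ) := Real.log_pos (by rw [lt_div_iff₀ hδ0]; linarith)
  have harg : (0:ℝ) < 16 * γ / ε := by positivity
  have hloga : 0 ≤ Real.log (1 + 16 * γ / ε) := Real.log_nonneg (by linarith)
  have hRpos : (0:ℝ) < R := by
    refine lt_of_lt_of_le ?_ hR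
    have h1 : 0 ≤ 2 * (d:ℝ) * M * Real.log (1 + 16 * γ / ε) := by positivity
    have h2 : (0:ℝ) < 8 / ε ^ 2 := by positivity
    nlinarith
  -- the net
  set r : ℝ := ε / (8 * γ) with hrdef
  have hr : 0 < r := by positivity
  obtain ⟨E, hEcard, hEnet⟩ := hcover r hr
  have h2r : 1 + 2 / r = 1 + 16 * γ / ε := by
    rw [hrdef]; field_simp; ring
  rw [h2r] at hEcard
  have hEne : 1 ≤ (E.card : ℝ) := by
    obtain ⟨e0, he0, -⟩ := hEnet hX.some
    exact_mod_cast Finset.card_pos.mpr ⟨e0, he0⟩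
  -- the feature function
  set g : X → X → X → ℝ := fun e e' ω => Real.exp (-γ * (dist e ω + dist ω e')) with hgdef
  have gpos : ∀ e e' ω, 0 < g e e' ω := fun e e' ω => Real.exp_pos _
  have gle1 : ∀ e e' ω, g e e' ω ≤ 1 := fun e e' ω => by
    rw [hgdef]
    refine Real.exp_le_one_iff.mpr ?_
    have := dist_nonneg (x := e) (y := ω); have := dist_nonneg (x := ω) (y := e'); nlinarith
  have gmeas : ∀ e e', Measurable (g e e') := fun e e' =>
    ((continuous_const.mul ((continuous_const.dist continuous_id).add
      (continuous_id.dist continuous_const))).rexp).measurable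
  have gabs : ∀ e e' ω, |g e e' ω| ≤ 1 := fun e e' ω => by
    rw [abs_of_pos (gpos e e' ω)]; exact gle1 e e' ω
  have gint : ∀ e e', Integrable (g e e') μ :=
    fun e e' => int_bdd (gmeas e e').aestronglyMeasurable (gabs e e')
  have hkg : ∀ x y, k x y = ∫ ω, g x y ω ∂μ := hk
  have hk01 : ∀ x y, 0 ≤ k x y ∧ k x y ≤ 1 := fun x y => by
    rw [hkg]
    constructor
    · exact integral_nonneg fun ω => (gpos x y ω).le
    · calc ∫ ω, g x y ω ∂μ ≤ ∫ _ω, (1:ℝ) ∂μ :=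
          integral_mono (gint x y) (integrable_const 1) (gle1 x y)
        _ = 1 := by simp [measure_univ]
  -- centered summands
  set Z : X → X → Fin R → Ω → ℝ :=
    fun e e' i => (fun ω => g e e' ω - k e e') ∘ W i with hZdef
  have hZmeas : ∀ e e' i, Measurable (Z e e' i) :=
    fun e e' i => ((gmeas e e').sub measurable_const).comp (hWmeas i)
  have hZabs : ∀ e e' i ω', |Z e e' i ω'| ≤ 1 := fun e e' i ω' => by
    have h1 := (gpos e e' (W i ω')).le
    have h2 := gle1 e e' (W i ω')
    have h3 := (hk01 e e').1
    have h4 := (hk01 e e').2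
    rw [hZdef]
    simp only [Function.comp_apply]
    rw [abs_le]; constructor <;> nlinarith
  have hcompint : ∀ e e' i, ∫ ω', g e e' (W i ω') = k e e' := fun e e' i => by
    rw [hkg, ← hid i, integral_map (hWmeas i).aemeasurable (gmeas e e').aestronglyMeasurable]
  have hZint : ∀ e e' i, ∫ ω', Z e e' i ω' = 0 := fun e e' i => by
    rw [hZdef]
    simp only [Function.comp_apply]
    have hgi : Integrable (fun ω' => g e e' (W i ω')) ℙ :=
      int_bdd (((gmeas e e').comp (hWmeas i)).aestronglyMeasurable)
        (fun ω' => gabs e e' (W i ω'))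
    rw [integral_sub hgi (integrable_const _)]
    rw [hcompint e e' i, integral_const]
    simp [measure_univ]
  have hZindep : ∀ e e', iIndepFun (Z e e') ℙ := fun e e' =>
    hindep.comp _ (fun i => (gmeas e e').sub measurable_const)
  -- bad events
  set B : X → X → Set Ω := fun e e' => {ω' | (R:ℝ) * (ε/2) ≤ |∑ i, Z e e' i ω'|} with hBdef
  have hBmeas : ∀ e e', MeasurableSet (B e e') := fun e e' =>
    measurableSet_le measurable_const
      ((Finset.measurable_sum _ fun i _ => hZmeas e e' i).abs)
  have hBbd : ∀ e e', ℙ (B e e') ≤ ENNReal.ofReal (2 * Real.exp (-(R:ℝ) * (ε/2)^2 / 2)) :=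
    fun e e' => chernoff_two (hZindep e e') (hZmeas e e') (hZabs e e') (hZint e e')
      (by positivity)
  set Bad : Set Ω := ⋃ e ∈ E, ⋃ e' ∈ E, B e e' with hBaddef
  have hBadmeas : MeasurableSet Bad :=
    MeasurableSet.biUnion E.countable_toSet fun e _ =>
      MeasurableSet.biUnion E.countable_toSet fun e' _ => hBmeas e e'
  -- union bound + arithmetic
  have hBadbd : ℙ Bad ≤ ENNReal.ofReal δ := by
    have h1 : ℙ Bad ≤ ∑ e ∈ E, ∑ e' ∈ E, ℙ (B e e') := by
      refine (measure_biUnion_finset_le E _).trans ?_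
      exact Finset.sum_le_sum fun e _ => measure_biUnion_finset_le E _
    have h2 : ∑ e ∈ E, ∑ e' ∈ E, ℙ (B e e') ≤
        ∑ _e ∈ E, ∑ _e' ∈ E, ENNReal.ofReal (2 * Real.exp (-(R:ℝ) * (ε/2)^2 / 2)) :=
      Finset.sum_le_sum fun e _ => Finset.sum_le_sum fun e' _ => hBbd e e'
    have h3 : ∑ _e ∈ E, ∑ _e' ∈ E, ENNReal.ofReal (2 * Real.exp (-(R:ℝ) * (ε/2)^2 / 2)) =
        ENNReal.ofReal (((E.card : ℝ) * E.card) * (2 * Real.exp (-(R:ℝ) * (ε/2)^2 / 2))) := by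
      rw [Finset.sum_const, Finset.sum_const, smul_smul, nsmul_eq_mul,
        ← ENNReal.ofReal_natCast (E.card * E.card),
        ← ENNReal.ofReal_mul (by positivity : (0:ℝ) ≤ ((E.card * E.card : ℕ) : ℝ))]
      congr 1
      push_cast
      ring
    have h4 : ((E.card : ℝ) * E.card) * (2 * Real.exp (-(R:ℝ) * (ε/2)^2 / 2)) ≤ δ := by
      set a := Real.log (1 + 16 * γ / ε) with hadef
      have hNle : (E.card : ℝ) ≤ Real.exp ((d * M : ℕ) * a) := by
        refine hEcard.trans ?_
        rw [← Real.exp_log (by linarith : (0:ℝ) < 1 + 16 * γ / ε), ← Real.exp_nat_mul, ← hadef]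
      have hkey : 2 * ((d:ℝ) * M) * a - (R:ℝ) * ε^2 / 8 ≤ Real.log (δ / 2) := by
        have hε2 : (0:ℝ) < ε ^ 2 := by positivity
        have hRge : 2 * (d:ℝ) * M * a + Real.log (2/δ) ≤ (R:ℝ) * ε^2 / 8 := by
          have h := mul_le_mul_of_nonneg_right hR (by positivity : (0:ℝ) ≤ ε^2/8)
          have heq : (8 / ε^2) * (2 * (d:ℝ) * M * a + Real.log (2/δ)) * (ε^2/8)
              = 2 * (d:ℝ) * M * a + Real.log (2/δ) := by
            field_simp
          rw [heq] at h
          calc 2 * (d:ℝ) * M * a + Real.log (2/δ) ≤ (R:ℝ) * (ε^2/8) := h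
            _ = (R:ℝ) * ε^2 / 8 := by ring
        have hlog2 : Real.log (δ/2) = -Real.log (2/δ) := by
          rw [← Real.log_inv]
          congr 1
          field_simp
        rw [hlog2]; linarith
      have hexp : Real.exp (2 * ((d:ℝ) * M) * a - (R:ℝ) * ε^2 / 8) ≤ δ / 2 := by
        calc Real.exp (2 * ((d:ℝ) * M) * a - (R:ℝ) * ε^2 / 8)
            ≤ Real.exp (Real.log (δ / 2)) := Real.exp_le_exp.mpr hkey
          _ = δ / 2 := Real.exp_log (by positivity)
      have hNN : (E.card : ℝ) * E.card ≤ Real.exp (2 * ((d:ℝ) * M) * a) := by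
        calc (E.card : ℝ) * E.card
            ≤ Real.exp ((d * M : ℕ) * a) * Real.exp ((d * M : ℕ) * a) := by
              apply mul_le_mul hNle hNle (by linarith) (Real.exp_pos _).le
          _ = Real.exp (2 * ((d:ℝ) * M) * a) := by
            rw [← Real.exp_add]; congr 1; push_cast; ring
      have hee : -(R:ℝ) * (ε/2)^2 / 2 = -((R:ℝ) * ε^2 / 8) := by ring
      calc ((E.card : ℝ) * E.card) * (2 * Real.exp (-(R:ℝ) * (ε/2)^2 / 2))
          ≤ Real.exp (2 * ((d:ℝ) * M) * a) * (2 * Real.exp (-(R:ℝ) * (ε/2)^2 / 2)) := by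
            apply mul_le_mul_of_nonneg_right hNN (by positivity)
        _ = 2 * (Real.exp (2 * ((d:ℝ) * M) * a) * Real.exp (-((R:ℝ) * ε^2 / 8))) := by
            rw [hee]; ring
        _ = 2 * Real.exp (2 * ((d:ℝ) * M) * a - (R:ℝ) * ε^2 / 8) := by
            rw [← Real.exp_add]
            congr 1
        _ ≤ 2 * (δ / 2) := by linarith
        _ = δ := by ring
    calc ℙ Bad ≤ _ := h1
      _ ≤ _ := h2
      _ = _ := h3
      _ ≤ ENNReal.ofReal δ := ENNReal.ofReal_le_ofReal h4
  -- good event inclusion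
  have hsub : Badᶜ ⊆ {ω' | ∀ x y : X, |k x y - ktil ω' x y| ≤ ε} := by
    intro ω' hω'
    simp only [Set.mem_compl_iff, hBaddef, Set.mem_iUnion, not_exists] at hω'
    intro x y
    obtain ⟨e, he, hxe⟩ := hEnet x
    obtain ⟨e', he', hye'⟩ := hEnet y
    have hnot : ω' ∉ B e e' := fun h => hω' e he e' he' h
    have hnet : |k e e' - ktil ω' e e'| ≤ ε / 2 := by
      have hlt : |∑ i, Z e e' i ω'| < (R:ℝ) * (ε/2) := by
        by_contra hcon
        exact hnot (le_of_not_gt hcon)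
      have hsum : ∑ i, Z e e' i ω' = (∑ i, g e e' (W i ω')) - (R:ℝ) * k e e' := by
        rw [hZdef]
        simp only [Function.comp_apply]
        rw [Finset.sum_sub_distrib, Finset.sum_const]
        simp
      have hktileq : ktil ω' e e' = (1 / (R:ℝ)) * ∑ i, g e e' (W i ω') := hktil ω' e e'
      have hRne : (R:ℝ) ≠ 0 := ne_of_gt hRpos
      have : k e e' - ktil ω' e e' = -(1/(R:ℝ)) * ∑ i, Z e e' i ω' := by
        rw [hktileq, hsum]
        field_simp
        ring
      rw [this, abs_mul, abs_neg, abs_of_pos (by positivity : (0:ℝ) < 1/(R:ℝ))]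
      calc (1/(R:ℝ)) * |∑ i, Z e e' i ω'|
          ≤ (1/(R:ℝ)) * ((R:ℝ) * (ε/2)) :=
            mul_le_mul_of_nonneg_left hlt.le (by positivity)
        _ = ε / 2 := by
            rw [← mul_assoc, one_div, inv_mul_cancel₀ hRne, one_mul]
    have hlipbd : γ * (dist x e + dist y e') ≤ ε / 4 := by
      have e1 : γ * dist x e ≤ γ * r := mul_le_mul_of_nonneg_left hxe hγ.le
      have e2 : γ * dist y e' ≤ γ * r := mul_le_mul_of_nonneg_left hye' hγ.le
      have hgr : γ * r = ε / 8 := by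
        rw [hrdef, mul_div_assoc']
        rw [mul_comm γ ε, mul_div_assoc, mul_comm (8:ℝ) γ, ← div_div,
          div_self hγ.ne', one_div, div_eq_mul_inv]
      nlinarith
    have hlipk : |k x y - k e e'| ≤ ε / 4 := by
      refine le_trans ?_ hlipbd
      rw [hkg, hkg, ← integral_sub (gint x y) (gint e e')]
      have habs : |∫ ω, (g x y ω - g e e' ω) ∂μ| ≤ ∫ ω, |g x y ω - g e e' ω| ∂μ := by
        simpa [Real.norm_eq_abs] using
          norm_integral_le_integral_norm (μ := μ) (f := fun ω => g x y ω - g e e' ω)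
      refine habs.trans ?_
      calc ∫ ω, |g x y ω - g e e' ω| ∂μ
          ≤ ∫ _ω, γ * (dist x e + dist y e') ∂μ := by
            refine integral_mono ((gint x y).sub (gint e e')).abs (integrable_const _)
              fun ω => ?_
            exact gfun_lip hγ x y e e' ω
        _ = γ * (dist x e + dist y e') := by simp [measure_univ]
    have hlipkt : |ktil ω' x y - ktil ω' e e'| ≤ ε / 4 := by
      refine le_trans ?_ hlipbd
      rw [hktil ω' x y, hktil ω' e e', ← mul_sub, ← Finset.sum_sub_distrib]
      rw [abs_mul, abs_of_pos (by positivity : (0:ℝ) < 1/(R:ℝ))]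
      calc (1/(R:ℝ)) * |∑ i, (Real.exp (-γ * (dist x (W i ω') + dist (W i ω') y)) -
            Real.exp (-γ * (dist e (W i ω') + dist (W i ω') e')))|
          ≤ (1/(R:ℝ)) * ∑ i, |Real.exp (-γ * (dist x (W i ω') + dist (W i ω') y)) -
            Real.exp (-γ * (dist e (W i ω') + dist (W i ω') e'))| := by
            apply mul_le_mul_of_nonneg_left (Finset.abs_sum_le_sum_abs _ _) (by positivity)
        _ ≤ (1/(R:ℝ)) * ∑ _i : Fin R, γ * (dist x e + dist y e') := by
            apply mul_le_mul_of_nonneg_left ?_ (by positivity)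
            exact Finset.sum_le_sum fun i _ => gfun_lip hγ x y e e' (W i ω')
        _ = γ * (dist x e + dist y e') := by
            rw [Finset.sum_const]
            simp only [Finset.card_univ, Fintype.card_fin, nsmul_eq_mul]
            field_simp
    calc |k x y - ktil ω' x y|
        ≤ |k x y - k e e'| + |k e e' - ktil ω' e e'| + |ktil ω' e e' - ktil ω' x y| := by
          have := abs_sub_le (k x y) (k e e') (ktil ω' x y)
          have := abs_sub_le (k e e') (ktil ω' e e') (ktil ω' x y)
          linarith [abs_sub_le (k x y) (k e e') (ktil ω' x y),
            abs_sub_le (k e e') (ktil ω' e e') (ktil ω' x y)]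
      _ ≤ ε/4 + ε/2 + ε/4 := by
          have h3 : |ktil ω' e e' - ktil ω' x y| ≤ ε/4 := by rw [abs_sub_comm]; exact hlipkt
          gcongr
      _ = ε := by ring
  calc ENNReal.ofReal (1 - δ) = 1 - ENNReal.ofReal δ := by
        rw [← ENNReal.ofReal_one, ← ENNReal.ofReal_sub _ hδ0.le]
    _ ≤ 1 - ℙ Bad := tsub_le_tsub_left hBadbd 1
    _ = ℙ Badᶜ := (prob_compl_eq_one_sub hBadmeas).symm
    _ ≤ ℙ {ω' | ∀ x y : X, |k x y - ktil ω' x y| ≤ ε} := measure_mono hsub
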